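/- For every α, β ∈ ℕ there is a constant C > 0, depending only on α and β, such that the following holds. Let ν ∈ ℂ, let λ be a nonzero real number, let g : ℝ∖{0} → ℂ be smooth, and define f(ξ) = (i/λ)·g(ξ)/(ξ − 1) for ξ ∈ ℝ∖{0} with ξ ≠ 1. Then, with I = [1/2, 3/2], ‖𝒰^β 𝒳^α f‖_{𝕃²(ℝ∖I)} ≤ (C/|λ|) · Σ_{j+k ≤ α+β, j ≤ β} ‖𝒰^j 𝒳^k g‖_{𝕃²(ℝ)}, provided the right-hand side is finite. -/

import Mathlib

open Complex Finset MeasureTheory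

/-- The operator `𝒳 f (ξ) = -2 ξ f'(ξ)`. -/
noncomputable def calX (f : ℝ → ℂ) : ℝ → ℂ := fun ξ => -2 * (ξ : ℂ) * deriv f ξ

/-- The operator `𝒰 f (ξ) = i((ν²-1)/(4ξ) f(ξ) - ξ f''(ξ))`. -/
noncomputable def calU (ν : ℂ) (f : ℝ → ℂ) : ℝ → ℂ :=
  fun ξ => Complex.I * ((ν ^ 2 - 1) / (4 * (ξ : ℂ)) * f ξ - (ξ : ℂ) * deriv (deriv f) ξ)

/-- The norm of `L²(J, |ξ|⁻¹ dξ)`, valued in `ℝ≥0∞`. -/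
noncomputable def L2w (h : ℝ → ℂ) (J : Set ℝ) : ENNReal :=
  (∫⁻ ξ in J, ENNReal.ofReal (‖h ξ‖ ^ 2) / ENNReal.ofReal |ξ|) ^ (1 / 2 : ℝ)


open Polynomial

/-- Rational coefficient functions: `P(ξ)/(ξ-1)^n` with `deg P ≤ n`. -/
def Good (b : ℝ → ℂ) : Prop :=
  ∃ n : ℕ, ∃ P : Polynomial ℂ, P.natDegree ≤ n ∧
    ∀ ξ : ℝ, ξ ≠ 1 → b ξ = P.eval (ξ : ℂ) / ((ξ : ℂ) - 1) ^ n

lemma good_zero : Good (fun _ => (0 : ℂ)) :=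
  ⟨0, 0, by simp, by simp⟩

lemma ofReal_ne_one {x : ℝ} (hx : x ≠ 1) : ((x : ℂ) - 1) ≠ 0 := by
  rw [sub_ne_zero]
  exact_mod_cast hx

lemma ratfun_hasDerivAt (P : Polynomial ℂ) (n : ℕ) {x : ℝ} (hx : x ≠ 1) :
    HasDerivAt (fun ξ : ℝ => P.eval (ξ : ℂ) / ((ξ : ℂ) - 1) ^ n)
      ((P.derivative * (X - C 1) - C (n : ℂ) * P).eval (x : ℂ) / ((x : ℂ) - 1) ^ (n + 1)) x := by
  have hz : ((x : ℂ) - 1) ≠ 0 := ofReal_ne_one hx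
  have hnum : HasDerivAt (fun ξ : ℝ => P.eval (ξ : ℂ)) (P.derivative.eval (x : ℂ)) x :=
    (P.hasDerivAt (x : ℂ)).comp_ofReal
  have hden : HasDerivAt (fun ξ : ℝ => ((ξ : ℂ) - 1) ^ n)
      ((n : ℂ) * ((x : ℂ) - 1) ^ (n - 1) * 1) x :=
    (((hasDerivAt_id ((x : ℂ))).sub_const 1).pow n).comp_ofReal
  have h := hnum.fun_div hden (pow_ne_zero _ hz)
  convert h using 1
  · rfl
  simp only [eval_sub, eval_mul, eval_X, eval_C, derivative_mul]
  cases n with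
  | zero => simp [mul_div_assoc, div_self hz]
  | succ m =>
    have hm : (x : ℂ) - 1 ≠ 0 := hz
    rw [Nat.add_sub_cancel, div_eq_div_iff (pow_ne_zero _ hz) (pow_ne_zero _ (pow_ne_zero _ hz))]
    push_cast
    ring

lemma ratQ_deg {P : Polynomial ℂ} {n : ℕ} (hP : P.natDegree ≤ n) :
    (P.derivative * (X - C 1) - C (n : ℂ) * P).natDegree ≤ n := by
  cases n with
  | zero =>
    have : P = C (P.coeff 0) := P.eq_C_of_natDegree_le_zero hP
    rw [this]
    simp
  | succ m =>
    refine (natDegree_sub_le _ _).trans (max_le ?_ ?_)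
    · refine (natDegree_mul_le).trans ?_
      have h1 : P.derivative.natDegree ≤ m := le_trans P.natDegree_derivative_le (by omega)
      have h2 : (X - C (1:ℂ)).natDegree ≤ 1 := natDegree_X_sub_C_le 1
      omega
    · exact (natDegree_C_mul_le _ _).trans hP

/-- The derivative of a Good function: `HasDerivAt` off 1, and a *strict* rational
representation (degree one less than the exponent). -/
lemma Good.deriv' {b : ℝ → ℂ} (hb : Good b) :
    (∀ x : ℝ, x ≠ 1 → HasDerivAt b (deriv b x) x) ∧
    ∃ n : ℕ, ∃ Q : Polynomial ℂ, Q.natDegree ≤ n ∧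
      ∀ x : ℝ, x ≠ 1 → deriv b x = Q.eval (x : ℂ) / ((x : ℂ) - 1) ^ (n + 1) := by
  obtain ⟨n, P, hP, hrep⟩ := hb
  have key : ∀ x : ℝ, x ≠ 1 → HasDerivAt b
      ((P.derivative * (X - C 1) - C (n : ℂ) * P).eval (x : ℂ) / ((x : ℂ) - 1) ^ (n + 1)) x := by
    intro x hx
    have hopen : {y : ℝ | y ≠ 1} ∈ nhds x := isOpen_ne.mem_nhds hx
    have hev : (fun ξ : ℝ => P.eval (ξ : ℂ) / ((ξ : ℂ) - 1) ^ n) =ᶠ[nhds x] b :=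
      Filter.eventually_of_mem hopen (fun y hy => (hrep y hy).symm)
    exact (ratfun_hasDerivAt P n hx).congr_of_eventuallyEq hev.symm
  constructor
  · intro x hx
    rw [(key x hx).deriv]
    exact key x hx
  · exact ⟨n, _, ratQ_deg hP, fun x hx => (key x hx).deriv⟩

lemma Good.hasDerivAt {b : ℝ → ℂ} (hb : Good b) {x : ℝ} (hx : x ≠ 1) :
    HasDerivAt b (deriv b x) x := hb.deriv'.1 x hx

lemma Good.derivFun {b : ℝ → ℂ} (hb : Good b) : Good (_root_.deriv b) := by
  obtain ⟨n, Q, hQ, hrep⟩ := hb.deriv'.2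
  exact ⟨n + 1, Q, hQ.trans (by omega), hrep⟩

lemma Good.const_mul {b : ℝ → ℂ} (hb : Good b) (c : ℂ) : Good (fun ξ => c * b ξ) := by
  obtain ⟨n, P, hP, hrep⟩ := hb
  refine ⟨n, C c * P, (natDegree_C_mul_le _ _).trans hP, fun ξ hξ => ?_⟩
  show c * b ξ = _
  rw [hrep ξ hξ]
  simp [mul_div_assoc]

lemma Good.const_mul_X_mul_deriv {b : ℝ → ℂ} (hb : Good b) (c : ℂ) :
    Good (fun ξ : ℝ => c * (ξ : ℂ) * _root_.deriv b ξ) := by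
  obtain ⟨n, Q, hQ, hrep⟩ := hb.deriv'.2
  refine ⟨n + 1, C c * X * Q, ?_, fun ξ hξ => ?_⟩
  · refine (natDegree_mul_le).trans ?_
    have h1 : (C c * X).natDegree ≤ 1 := (natDegree_C_mul_le _ _).trans (by simp)
    omega
  · show c * (ξ:ℂ) * _root_.deriv b ξ = _
    rw [hrep ξ hξ]
    simp [mul_div_assoc]

lemma Good.add {b₁ b₂ : ℝ → ℂ} (h₁ : Good b₁) (h₂ : Good b₂) :
    Good (fun ξ => b₁ ξ + b₂ ξ) := by
  obtain ⟨n₁, P₁, hP₁, hrep₁⟩ := h₁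
  obtain ⟨n₂, P₂, hP₂, hrep₂⟩ := h₂
  refine ⟨n₁ + n₂, P₁ * (X - C 1) ^ n₂ + P₂ * (X - C 1) ^ n₁, ?_, fun ξ hξ => ?_⟩
  · refine (natDegree_add_le _ _).trans (max_le ?_ ?_) <;>
    · refine (natDegree_mul_le).trans ?_
      have := natDegree_pow_le (p := (X - C (1:ℂ))) (n := n₂)
      have := natDegree_pow_le (p := (X - C (1:ℂ))) (n := n₁)
      have h2 : (X - C (1:ℂ)).natDegree ≤ 1 := natDegree_X_sub_C_le 1
      nlinarith [natDegree_pow_le (p := (X - C (1:ℂ))) (n := n₂),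
        natDegree_pow_le (p := (X - C (1:ℂ))) (n := n₁)]
  · have hz : ((ξ : ℂ) - 1) ≠ 0 := ofReal_ne_one hξ
    show b₁ ξ + b₂ ξ = _
    rw [hrep₁ ξ hξ, hrep₂ ξ hξ]
    simp only [eval_add, eval_mul, eval_pow, eval_sub, eval_X, eval_C]
    rw [pow_add]
    field_simp

lemma Good.bound {b : ℝ → ℂ} (hb : Good b) :
    ∃ C : ℝ, 0 < C ∧ ∀ ξ : ℝ, ξ ∉ Set.Icc (1/2 : ℝ) (3/2) → ‖b ξ‖ ≤ C := by
  obtain ⟨n, P, hP, hrep⟩ := hb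
  set S : ℝ := ∑ i ∈ range (n + 1), ‖P.coeff i‖ with hS
  have hS0 : 0 ≤ S := Finset.sum_nonneg (fun i _ => norm_nonneg _)
  refine ⟨S * 3 ^ n + 1, by positivity, fun ξ hξ => ?_⟩
  rw [Set.mem_Icc, not_and_or] at hξ
  have hd : (1/2 : ℝ) ≤ |ξ - 1| := by
    rcases hξ with h | h
    · push_neg at h
      rw [_root_.abs_of_nonpos (by linarith)]; linarith
    · push_neg at h
      rw [_root_.abs_of_nonneg (by linarith)]; linarith
  have hd0 : (0:ℝ) < |ξ - 1| := by linarith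
  have hξ1 : ξ ≠ 1 := by
    intro h; rw [h] at hd; norm_num at hd
  have hcast : ((ξ : ℂ) - 1) = ((ξ - 1 : ℝ) : ℂ) := by push_cast; ring
  have hnorm1 : ‖(ξ : ℂ) - 1‖ = |ξ - 1| := by rw [hcast, Complex.norm_real, Real.norm_eq_abs]
  have hnormξ : ‖(ξ : ℂ)‖ ≤ 3 * |ξ - 1| := by
    rw [Complex.norm_real, Real.norm_eq_abs]
    have : |ξ| ≤ |ξ - 1| + 1 := by
      calc |ξ| = |(ξ - 1) + 1| := by ring_nf
        _ ≤ |ξ - 1| + |(1:ℝ)| := abs_add_le _ _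
        _ = |ξ - 1| + 1 := by norm_num
    linarith
  have hev : ‖P.eval (ξ : ℂ)‖ ≤ S * (3 * |ξ - 1|) ^ n := by
    rw [P.eval_eq_sum_range' (lt_of_le_of_lt hP (Nat.lt_succ_self n))]
    calc ‖∑ i ∈ range (n+1), P.coeff i * (ξ:ℂ) ^ i‖
        ≤ ∑ i ∈ range (n+1), ‖P.coeff i * (ξ:ℂ) ^ i‖ := norm_sum_le _ _
      _ ≤ ∑ i ∈ range (n+1), ‖P.coeff i‖ * (3 * |ξ - 1|) ^ n := by
          refine Finset.sum_le_sum (fun i hi => ?_)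
          rw [norm_mul, norm_pow]
          refine mul_le_mul_of_nonneg_left ?_ (norm_nonneg _)
          calc ‖(ξ:ℂ)‖ ^ i ≤ (3 * |ξ - 1|) ^ i :=
                pow_le_pow_left₀ (norm_nonneg _) hnormξ i
            _ ≤ (3 * |ξ - 1|) ^ n := by
                refine pow_le_pow_right₀ ?_ (Nat.lt_succ_iff.mp (Finset.mem_range.mp hi))
                linarith
      _ = S * (3 * |ξ - 1|) ^ n := by rw [hS, Finset.sum_mul]
  calc ‖b ξ‖ = ‖P.eval (ξ:ℂ)‖ / |ξ - 1| ^ n := by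
        rw [hrep ξ hξ1, norm_div, norm_pow, hnorm1]
    _ ≤ (S * (3 * |ξ - 1|) ^ n) / |ξ - 1| ^ n := by gcongr
    _ = S * 3 ^ n := by rw [mul_pow]; field_simp
    _ ≤ S * 3 ^ n + 1 := by linarith

section Smooth
variable {U : Set ℝ} {F G : ℝ → ℂ} {ν : ℂ} {x : ℝ}

lemma inftop : ((⊤ : ℕ∞) : WithTop ℕ∞) + 1 ≤ ((⊤ : ℕ∞) : WithTop ℕ∞) := by
  simp

lemma smooth_deriv (hU : IsOpen U) (hF : ContDiffOn ℝ (⊤:ℕ∞) F U) :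
    ContDiffOn ℝ (⊤:ℕ∞) (deriv F) U :=
  hF.deriv_of_isOpen hU inftop

lemma smooth_ofReal : ContDiff ℝ (⊤:ℕ∞) (fun ξ : ℝ => (ξ : ℂ)) :=
  Complex.ofRealCLM.contDiff

lemma smooth_calX (hU : IsOpen U) (hF : ContDiffOn ℝ (⊤:ℕ∞) F U) :
    ContDiffOn ℝ (⊤:ℕ∞) (calX F) U :=
  ((contDiff_const.mul smooth_ofReal).contDiffOn).mul (smooth_deriv hU hF)

lemma smooth_calU (hU : IsOpen U) (h0 : ∀ y ∈ U, y ≠ 0) (hF : ContDiffOn ℝ (⊤:ℕ∞) F U) :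
    ContDiffOn ℝ (⊤:ℕ∞) (calU ν F) U := by
  have h1 : ContDiffOn ℝ (⊤:ℕ∞) (fun ξ : ℝ => (ν ^ 2 - 1) / (4 * (ξ:ℂ))) U := by
    have hne : ∀ y ∈ U, (4 * (y:ℂ)) ≠ 0 := by
      intro y hy
      simp only [ne_eq, mul_eq_zero]
      push_neg
      exact ⟨by norm_num, Complex.ofReal_ne_zero.2 (h0 y hy)⟩
    have hinv : ContDiffOn ℝ (⊤:ℕ∞) (fun ξ : ℝ => (4 * (ξ:ℂ))⁻¹) U :=
      ContDiffOn.inv ((contDiff_const.mul smooth_ofReal).contDiffOn) hne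
    exact ((contDiffOn_const : ContDiffOn ℝ (⊤:ℕ∞) (fun _ : ℝ => ν ^ 2 - 1) U).mul
      hinv).congr (fun y hy => (div_eq_mul_inv _ _))
  have h2 : ContDiffOn ℝ (⊤:ℕ∞) (fun ξ : ℝ => (ξ:ℂ) * deriv (deriv F) ξ) U :=
    (smooth_ofReal.contDiffOn).mul (smooth_deriv hU (smooth_deriv hU hF))
  exact (contDiffOn_const : ContDiffOn ℝ (⊤:ℕ∞) (fun _ : ℝ => Complex.I) U).mul ((h1.mul hF).sub h2)

lemma hda (hU : IsOpen U) (hF : ContDiffOn ℝ (⊤:ℕ∞) F U) (hx : x ∈ U) :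
    HasDerivAt F (deriv F x) x :=
  ((hF.contDiffAt (hU.mem_nhds hx)).differentiableAt (by simp)).hasDerivAt

lemma smooth_iter (hU : IsOpen U) (h0 : ∀ y ∈ U, y ≠ 0) {g : ℝ → ℂ}
    (hg : ContDiffOn ℝ (⊤:ℕ∞) g U) (j k : ℕ) :
    ContDiffOn ℝ (⊤:ℕ∞) ((calU ν)^[j] (calX^[k] g)) U := by
  induction j with
  | zero =>
    simp only [Function.iterate_zero, id_eq]
    induction k with
    | zero => simpa using hg
    | succ m ih =>
      rw [Function.iterate_succ_apply']
      exact smooth_calX hU ih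
  | succ m ih =>
    rw [Function.iterate_succ_apply']
    exact smooth_calU hU h0 ih

end Smooth

section PW
variable {U : Set ℝ} {F G h : ℝ → ℂ} {ν : ℂ} {x : ℝ}

lemma calX_congr (hFG : F =ᶠ[nhds x] G) : calX F x = calX G x := by
  unfold calX; rw [hFG.deriv_eq]

lemma calU_congr (hFG : F =ᶠ[nhds x] G) : calU ν F x = calU ν G x := by
  unfold calU
  rw [hFG.self_of_nhds, hFG.deriv.deriv_eq]

lemma eqOn_nhds (hU : IsOpen U) (hx : x ∈ U) (hFG : Set.EqOn F G U) : F =ᶠ[nhds x] G :=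
  Filter.eventually_of_mem (hU.mem_nhds hx) hFG

lemma iterU_congr (hU : IsOpen U) (hFG : Set.EqOn F G U) (j : ℕ) :
    Set.EqOn ((calU ν)^[j] F) ((calU ν)^[j] G) U := by
  induction j with
  | zero => simpa using hFG
  | succ m ih =>
    intro x hx
    rw [Function.iterate_succ_apply', Function.iterate_succ_apply']
    exact calU_congr (eqOn_nhds hU hx ih)

lemma hre : HasDerivAt (fun ξ : ℝ => (ξ : ℂ)) 1 x := by
  simpa using (hasDerivAt_id x).ofReal_comp

lemma calU_add_pt (hU : IsOpen U) (hx : x ∈ U) (hF : ContDiffOn ℝ (⊤:ℕ∞) F U)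
    (hG : ContDiffOn ℝ (⊤:ℕ∞) G U) (c : ℂ) :
    calU ν (fun y => F y + c * G y) x = calU ν F x + c * calU ν G x := by
  have hd1 : Set.EqOn (deriv (fun y => F y + c * G y)) (fun y => deriv F y + c * deriv G y) U :=
    fun y hy => ((hda hU hF hy).add ((hda hU hG hy).const_mul c)).deriv
  have hd2 : deriv (deriv (fun y => F y + c * G y)) x
      = deriv (deriv F) x + c * deriv (deriv G) x := by
    rw [(eqOn_nhds hU hx hd1).deriv_eq]
    exact (((hda hU (smooth_deriv hU hF) hx)).add
      ((hda hU (smooth_deriv hU hG) hx).const_mul c)).deriv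
  unfold calU
  rw [hd2]
  ring

lemma iterU_add (hU : IsOpen U) (h0 : ∀ y ∈ U, y ≠ 0) (c : ℂ) (j : ℕ)
    (hF : ContDiffOn ℝ (⊤:ℕ∞) F U) (hG : ContDiffOn ℝ (⊤:ℕ∞) G U) :
    Set.EqOn ((calU ν)^[j] (fun y => F y + c * G y))
      (fun y => (calU ν)^[j] F y + c * (calU ν)^[j] G y) U := by
  induction j generalizing F G with
  | zero => intro y _; simp
  | succ m ih =>
    intro x hx
    rw [Function.iterate_succ_apply]
    have e : Set.EqOn (calU ν (fun y => F y + c * G y))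
        (fun y => calU ν F y + c * calU ν G y) U :=
      fun y hy => calU_add_pt hU hy hF hG c
    rw [iterU_congr hU e m hx,
      ih (smooth_calU hU h0 hF) (smooth_calU hU h0 hG) hx]
    rw [← Function.iterate_succ_apply, ← Function.iterate_succ_apply]

lemma calX_calU_pt (hU : IsOpen U) (h0 : ∀ y ∈ U, y ≠ 0) (hx : x ∈ U)
    (hh : ContDiffOn ℝ (⊤:ℕ∞) h U) :
    calX (calU ν h) x = calU ν (calX h) x + 2 * calU ν h x := by
  have hx0 : (x : ℂ) ≠ 0 := Complex.ofReal_ne_zero.2 (h0 x hx)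
  have hd := smooth_deriv hU hh
  have hdd := smooth_deriv hU hd
  have hq : HasDerivAt (fun ξ : ℝ => (ν ^ 2 - 1) / (4 * (ξ:ℂ)))
      ((0 * (4 * (x:ℂ)) - (ν ^ 2 - 1) * (4 * 1)) / (4 * (x:ℂ)) ^ 2) x :=
    (hasDerivAt_const x _).div (hre.const_mul 4) (by simpa using hx0)
  -- derivative of `calU ν h`
  have htot : HasDerivAt (calU ν h)
      (Complex.I * ((((0 * (4 * (x:ℂ)) - (ν ^ 2 - 1) * (4 * 1)) / (4 * (x:ℂ)) ^ 2) * h x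
        + (ν ^ 2 - 1) / (4 * (x:ℂ)) * deriv h x)
        - (1 * deriv (deriv h) x + (x:ℂ) * deriv (deriv (deriv h)) x))) x := by
    exact ((hq.mul (hda hU hh hx)).sub (hre.mul (hda hU hdd hx))).const_mul Complex.I
  -- first derivative of `calX h` on U
  have hXd : Set.EqOn (deriv (calX h)) (fun y => -2 * 1 * deriv h y
      + -2 * (y:ℂ) * deriv (deriv h) y) U := by
    intro y hy
    exact ((hre.const_mul (-2)).mul (hda hU hd hy)).deriv
  have hXdd : deriv (deriv (calX h)) x = (-2 * 1 * deriv (deriv h) x)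
      + (-2 * 1 * deriv (deriv h) x + -2 * (x:ℂ) * deriv (deriv (deriv h)) x) := by
    rw [(eqOn_nhds hU hx hXd).deriv_eq]
    exact (((hda hU hd hx).const_mul (-2 * 1)).add
      ((hre.const_mul (-2)).mul (hda hU hdd hx))).deriv
  have e1 : calU ν (calX h) x = Complex.I * ((ν ^ 2 - 1) / (4 * (x:ℂ)) * calX h x
      - (x:ℂ) * deriv (deriv (calX h)) x) := rfl
  show -2 * (x:ℂ) * deriv (calU ν h) x = _
  rw [htot.deriv, e1, hXdd]
  simp only [calU, calX]
  field_simp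
  ring

end PW

section Comm
variable {U : Set ℝ} {ν : ℂ}

lemma calX_iterU (hU : IsOpen U) (h0 : ∀ y ∈ U, y ≠ 0) {h : ℝ → ℂ}
    (hh : ContDiffOn ℝ (⊤:ℕ∞) h U) (j : ℕ) :
    Set.EqOn (calX ((calU ν)^[j] h))
      (fun y => (calU ν)^[j] (calX h) y + (2 * (j:ℂ)) * (calU ν)^[j] h y) U := by
  induction j generalizing h with
  | zero => intro y _; simp
  | succ m ih =>
    intro x hx
    rw [Function.iterate_succ_apply]
    rw [ih (smooth_calU hU h0 hh) hx]
    show (calU ν)^[m] (calX (calU ν h)) x + 2 * (m:ℂ) * (calU ν)^[m] (calU ν h) x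
      = (calU ν)^[m+1] (calX h) x + (2 * ((m+1 : ℕ):ℂ)) * (calU ν)^[m+1] h x
    have e : Set.EqOn (calX (calU ν h)) (fun y => calU ν (calX h) y + 2 * calU ν h y) U :=
      fun y hy => calX_calU_pt hU h0 hy hh
    rw [iterU_congr hU e m hx]
    rw [iterU_add hU h0 2 m (smooth_calU hU h0 (smooth_calX hU hh)) (smooth_calU hU h0 hh) hx]
    show (calU ν)^[m] (calU ν (calX h)) x + 2 * (calU ν)^[m] (calU ν h) x
        + 2 * (m:ℂ) * (calU ν)^[m] (calU ν h) x = _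
    rw [← Function.iterate_succ_apply, ← Function.iterate_succ_apply,
      Function.iterate_succ_apply, Function.iterate_succ_apply]
    push_cast
    ring

end Comm

section Rep

noncomputable def m0 : ℝ → ℂ := fun ξ => 1 / ((ξ:ℂ) - 1)

lemma good_m0 : Good m0 := by
  refine ⟨1, Polynomial.C 1, by simp, fun ξ _ => ?_⟩
  simp [m0]

lemma mem_O0 {x : ℝ} (hx : x ≠ 0) : x ∈ ({(0:ℝ)}ᶜ : Set ℝ) := by simpa using hx

lemma h0_O0 : ∀ y ∈ ({(0:ℝ)}ᶜ : Set ℝ), y ≠ 0 := fun y hy => by simpa using hy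

lemma isOpen_UU : IsOpen {y : ℝ | y ≠ 0 ∧ y ≠ 1} := by
  have : {y : ℝ | y ≠ 0 ∧ y ≠ 1} = ({(0:ℝ)}ᶜ ∩ {(1:ℝ)}ᶜ : Set ℝ) := by
    ext y; simp
  rw [this]
  exact isOpen_compl_singleton.inter isOpen_compl_singleton

lemma repX (α : ℕ) : ∃ b : ℕ → ℝ → ℂ,
    (∀ k, Good (b k)) ∧ (∀ k, α < k → b k = fun _ => 0) ∧
    ∀ (g : ℝ → ℂ), ContDiffOn ℝ (⊤:ℕ∞) g {(0:ℝ)}ᶜ → ∀ x : ℝ, x ≠ 0 → x ≠ 1 →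
      calX^[α] (fun ξ => m0 ξ * g ξ) x = ∑ k ∈ range (α+1), b k x * (calX^[k] g) x := by
  induction α with
  | zero =>
    refine ⟨fun k => if k = 0 then m0 else fun _ => 0, ?_, ?_, ?_⟩
    · intro k
      rcases k with _ | k
      · simpa using good_m0
      · simpa using good_zero
    · intro k hk
      rcases k with _ | k
      · omega
      · simp
    · intro g hg x hx0 hx1
      simp
  | succ α ih =>
    obtain ⟨b, hbG, hbV, hrep⟩ := ih
    refine ⟨fun k ξ => (if k = 0 then 0 else b (k-1) ξ) + -2 * (ξ:ℂ) * deriv (b k) ξ,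
      ?_, ?_, ?_⟩
    · intro k
      refine Good.add ?_ ((hbG k).const_mul_X_mul_deriv (-2))
      rcases k with _ | k
      · simpa using good_zero
      · simpa using hbG k
    · intro k hk
      funext ξ
      rcases k with _ | k
      · omega
      · have e1 : b k = fun _ => 0 := hbV k (by omega)
        have e2 : b (k+1) = fun _ => 0 := hbV (k+1) (by omega)
        simp [e1, e2]
    · intro g hg x hx0 hx1
      have hxUU : x ∈ {y : ℝ | y ≠ 0 ∧ y ≠ 1} := ⟨hx0, hx1⟩
      have hsm : ∀ k : ℕ, ContDiffOn ℝ (⊤:ℕ∞) (calX^[k] g) {(0:ℝ)}ᶜ := by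
        intro k
        have := smooth_iter (ν := 0) isOpen_compl_singleton h0_O0 hg 0 k
        simpa using this
      have hT : Set.EqOn (calX^[α] (fun ξ => m0 ξ * g ξ))
          (fun y => ∑ k ∈ range (α+1), b k y * (calX^[k] g) y) {y : ℝ | y ≠ 0 ∧ y ≠ 1} :=
        fun y hy => hrep g hg y hy.1 hy.2
      have hder : HasDerivAt (fun y => ∑ k ∈ range (α+1), b k y * (calX^[k] g) y)
          (∑ k ∈ range (α+1), (deriv (b k) x * (calX^[k] g) x
            + b k x * deriv (calX^[k] g) x)) x :=
        HasDerivAt.fun_sum (fun k _ =>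
          ((hbG k).hasDerivAt hx1).mul (hda isOpen_compl_singleton (hsm k) (mem_O0 hx0)))
      have lhs_eq : calX^[α+1] (fun ξ => m0 ξ * g ξ) x
          = ∑ k ∈ range (α+1), (-2 * (x:ℂ) * deriv (b k) x * (calX^[k] g) x
              + b k x * (calX^[k+1] g) x) := by
        rw [Function.iterate_succ_apply']
        rw [calX_congr (eqOn_nhds isOpen_UU hxUU hT)]
        show -2 * (x:ℂ) * deriv _ x = _
        rw [hder.deriv, Finset.mul_sum]
        refine Finset.sum_congr rfl (fun k _ => ?_)
        rw [Function.iterate_succ_apply']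
        show -2 * (x:ℂ) * (deriv (b k) x * (calX^[k] g) x + b k x * deriv (calX^[k] g) x)
          = _ + b k x * (-2 * (x:ℂ) * deriv (calX^[k] g) x)
        ring
      rw [lhs_eq]
      have key : ∑ k ∈ range (α+1+1),
          ((if k = 0 then 0 else b (k-1) x) + -2 * (x:ℂ) * deriv (b k) x) * (calX^[k] g) x
          = ∑ k ∈ range (α+1), (-2 * (x:ℂ) * deriv (b k) x * (calX^[k] g) x
              + b k x * (calX^[k+1] g) x) := by
        have split : ∀ k ∈ range (α+1+1),
            ((if k = 0 then 0 else b (k-1) x) + -2 * (x:ℂ) * deriv (b k) x) * (calX^[k] g) x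
            = (if k = 0 then 0 else b (k-1) x * (calX^[k] g) x)
              + (-2 * (x:ℂ) * deriv (b k) x) * (calX^[k] g) x := by
          intro k _
          rcases k with _ | k
          · simp
          · simp only [if_neg (Nat.succ_ne_zero k)]
            ring
        rw [Finset.sum_congr rfl split, Finset.sum_add_distrib]
        rw [Finset.sum_range_succ'
          (fun k => if k = 0 then 0 else b (k-1) x * (calX^[k] g) x)]
        rw [Finset.sum_range_succ
          (fun k => (-2 * (x:ℂ) * deriv (b k) x) * (calX^[k] g) x)]
        have hlast : b (α+1) = fun _ => 0 := hbV (α+1) (by omega)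
        rw [hlast]
        norm_num
        rw [← sub_eq_add_neg, ← Finset.sum_sub_distrib]
        exact Finset.sum_congr rfl (fun k _ => by ring)
      rw [← key]

end Rep


lemma rep (α β : ℕ) : ∃ b : ℕ → ℕ → ℝ → ℂ,
    (∀ j k, Good (b j k)) ∧
    (∀ j k, β < j → b j k = fun _ => 0) ∧
    (∀ j k, α + β < j + k → b j k = fun _ => 0) ∧
    ∀ (ν : ℂ) (g : ℝ → ℂ), ContDiffOn ℝ (⊤:ℕ∞) g {(0:ℝ)}ᶜ → ∀ x : ℝ, x ≠ 0 → x ≠ 1 →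
      (calU ν)^[β] (calX^[α] (fun ξ => m0 ξ * g ξ)) x
        = ∑ j ∈ range (β+1), ∑ k ∈ range (α+β+1),
            b j k x * ((calU ν)^[j] (calX^[k] g)) x := by
  induction β with
  | zero =>
    obtain ⟨b, hbG, hbV, hrep⟩ := repX α
    refine ⟨fun j k => if j = 0 then b k else fun _ => 0, ?_, ?_, ?_, ?_⟩
    · intro j k
      rcases j with _ | j
      · simpa using hbG k
      · simpa using good_zero
    · intro j k hj
      rcases j with _ | j
      · omega
      · simp
    · intro j k hjk
      rcases j with _ | j
      · simp only [if_pos rfl]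
        exact hbV k (by omega)
      · simp
    · intro ν g hg x hx0 hx1
      have := hrep g hg x hx0 hx1
      simpa using this
  | succ β ih =>
    obtain ⟨b, hbG, hbV1, hbV2, hrep⟩ := ih
    refine ⟨fun j k ξ => (if j = 0 then 0 else b (j-1) k ξ)
      + Complex.I * (if k = 0 then 0 else deriv (b j (k-1)) ξ)
      + 2 * (j:ℂ) * Complex.I * deriv (b j k) ξ
      + -Complex.I * (ξ:ℂ) * deriv (deriv (b j k)) ξ, ?_, ?_, ?_, ?_⟩
    · intro j k
      refine Good.add (Good.add (Good.add ?_ ?_)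
        ((hbG j k).derivFun.const_mul (2 * (j:ℂ) * Complex.I)))
        ((hbG j k).derivFun.const_mul_X_mul_deriv (-Complex.I))
      · rcases j with _ | j
        · simpa using good_zero
        · simpa using hbG j k
      · rcases k with _ | k
        · simpa using good_zero
        · simpa using (hbG j k).derivFun.const_mul Complex.I
    · intro j k hj
      funext ξ
      rcases j with _ | j
      · omega
      · have e1 : b j k = fun _ => 0 := hbV1 j k (by omega)
        have e2 : b (j+1) k = fun _ => 0 := hbV1 (j+1) k (by omega)
        rcases k with _ | k
        · simp [e1, e2]
        · have e3 : b (j+1) k = fun _ => 0 := hbV1 (j+1) k (by omega)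
          simp [e1, e2, e3]
    · intro j k hjk
      funext ξ
      have e1 : b j k = fun _ => 0 := hbV2 j k (by omega)
      rcases j with _ | j
      · rcases k with _ | k
        · omega
        · have e3 : b 0 k = fun _ => 0 := hbV2 0 k (by omega)
          simp [e1, e3]
      · have e2 : b j k = fun _ => 0 := hbV2 j k (by omega)
        rcases k with _ | k
        · simp [e1, e2]
        · have e3 : b (j+1) k = fun _ => 0 := hbV2 (j+1) k (by omega)
          simp [e1, e2, e3]
    · intro ν g hg x hx0 hx1
      have hxUU : x ∈ {y : ℝ | y ≠ 0 ∧ y ≠ 1} := ⟨hx0, hx1⟩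
      have hsm : ∀ j k : ℕ, ContDiffOn ℝ (⊤:ℕ∞) ((calU ν)^[j] (calX^[k] g)) {(0:ℝ)}ᶜ :=
        fun j k => smooth_iter isOpen_compl_singleton h0_O0 hg j k
      set h : ℕ → ℕ → ℝ → ℂ := fun j k => (calU ν)^[j] (calX^[k] g) with hh
      have hT : Set.EqOn ((calU ν)^[β] (calX^[α] (fun ξ => m0 ξ * g ξ)))
          (fun y => ∑ j ∈ range (β+1), ∑ k ∈ range (α+β+1), b j k y * h j k y)
          {y : ℝ | y ≠ 0 ∧ y ≠ 1} := fun y hy => hrep ν g hg y hy.1 hy.2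
      have hTd : Set.EqOn
          (deriv (fun y => ∑ j ∈ range (β+1), ∑ k ∈ range (α+β+1), b j k y * h j k y))
          (fun y => ∑ j ∈ range (β+1), ∑ k ∈ range (α+β+1),
            (deriv (b j k) y * h j k y + b j k y * deriv (h j k) y))
          {y : ℝ | y ≠ 0 ∧ y ≠ 1} := by
        intro y hy
        exact (HasDerivAt.fun_sum (fun j _ => HasDerivAt.fun_sum (fun k _ =>
          ((hbG j k).hasDerivAt hy.2).mul
            (hda isOpen_compl_singleton (hsm j k) (mem_O0 hy.1))))).deriv
      have hTdd : deriv (deriv (fun y => ∑ j ∈ range (β+1), ∑ k ∈ range (α+β+1),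
            b j k y * h j k y)) x
          = ∑ j ∈ range (β+1), ∑ k ∈ range (α+β+1),
            ((deriv (deriv (b j k)) x * h j k x + deriv (b j k) x * deriv (h j k) x)
              + (deriv (b j k) x * deriv (h j k) x + b j k x * deriv (deriv (h j k)) x)) := by
        rw [(eqOn_nhds isOpen_UU hxUU hTd).deriv_eq]
        exact (HasDerivAt.fun_sum (fun j _ => HasDerivAt.fun_sum (fun k _ =>
          (((hbG j k).derivFun.hasDerivAt hx1).mul
            (hda isOpen_compl_singleton (hsm j k) (mem_O0 hx0))).add
          (((hbG j k).hasDerivAt hx1).mul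
            (hda isOpen_compl_singleton
              (smooth_deriv isOpen_compl_singleton (hsm j k)) (mem_O0 hx0)))))).deriv
      have hXh : ∀ j k : ℕ, calX (h j k) x = h j (k+1) x + 2 * (j:ℂ) * h j k x := by
        intro j k
        have hs : ContDiffOn ℝ (⊤:ℕ∞) (calX^[k] g) {(0:ℝ)}ᶜ := by simpa using hsm 0 k
        have hcx := calX_iterU (ν := ν) isOpen_compl_singleton h0_O0 hs j (mem_O0 hx0)
        rw [hh]
        show calX ((calU ν)^[j] (calX^[k] g)) x = _
        rw [hcx]
        show (calU ν)^[j] (calX (calX^[k] g)) x + 2 * (j:ℂ) * (calU ν)^[j] (calX^[k] g) x = _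
        rw [← Function.iterate_succ_apply' calX k g]
      have hUh : ∀ j k : ℕ, h (j+1) k = calU ν (h j k) :=
        fun j k => Function.iterate_succ_apply' (calU ν) j (calX^[k] g)
      -- the expansion of `𝒰 T x`
      have left_eq : (calU ν)^[β+1] (calX^[α] (fun ξ => m0 ξ * g ξ)) x
          = ∑ j ∈ range (β+1), ∑ k ∈ range (α+β+1),
              (b j k x * h (j+1) k x
                + Complex.I * deriv (b j k) x * h j (k+1) x
                + 2 * (j:ℂ) * Complex.I * deriv (b j k) x * h j k x
                + -Complex.I * (x:ℂ) * deriv (deriv (b j k)) x * h j k x) := by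
        rw [Function.iterate_succ_apply']
        rw [calU_congr (eqOn_nhds isOpen_UU hxUU hT)]
        show Complex.I * ((ν^2 - 1) / (4*(x:ℂ))
            * (∑ j ∈ range (β+1), ∑ k ∈ range (α+β+1), b j k x * h j k x)
          - (x:ℂ) * deriv (deriv (fun y => ∑ j ∈ range (β+1), ∑ k ∈ range (α+β+1),
              b j k y * h j k y)) x) = _
        rw [hTdd]
        simp only [Finset.mul_sum, ← Finset.sum_sub_distrib]
        refine Finset.sum_congr rfl fun j _ => Finset.sum_congr rfl fun k _ => ?_
        rw [hUh j k]
        have e2 : h j (k+1) x = calX (h j k) x - 2 * (j:ℂ) * h j k x := by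
          rw [hXh j k]; ring
        rw [e2]
        show Complex.I * ((ν^2 - 1) / (4*(x:ℂ)) * (b j k x * h j k x) - (x:ℂ) * _)
          = b j k x * (Complex.I * ((ν^2 - 1) / (4*(x:ℂ)) * h j k x
              - (x:ℂ) * deriv (deriv (h j k)) x))
            + Complex.I * deriv (b j k) x
                * (-2 * (x:ℂ) * deriv (h j k) x - 2 * (j:ℂ) * h j k x)
            + 2 * (j:ℂ) * Complex.I * deriv (b j k) x * h j k x
            + -Complex.I * (x:ℂ) * deriv (deriv (b j k)) x * h j k x
        ring
      rw [left_eq]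
      -- bookkeeping: match with the new coefficient family
      have hP1 : ∑ j ∈ range (β+1+1), ∑ k ∈ range (α+β+1+1),
            (if j = 0 then 0 else b (j-1) k x) * h j k x
          = ∑ j ∈ range (β+1), ∑ k ∈ range (α+β+1), b j k x * h (j+1) k x := by
        rw [Finset.sum_range_succ' (fun j => ∑ k ∈ range (α+β+1+1),
          (if j = 0 then 0 else b (j-1) k x) * h j k x) (β+1)]
        simp only [Nat.succ_ne_zero, ite_false, ite_true, zero_mul,
          Finset.sum_const_zero, add_zero, Nat.add_sub_cancel]
        refine Finset.sum_congr rfl fun j _ => ?_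
        rw [Finset.sum_range_succ]
        have e : b j (α+β+1) = fun _ => 0 := hbV2 j (α+β+1) (by omega)
        rw [e]
        simp
      have hP2 : ∑ j ∈ range (β+1+1), ∑ k ∈ range (α+β+1+1),
            (Complex.I * (if k = 0 then 0 else deriv (b j (k-1)) x)) * h j k x
          = ∑ j ∈ range (β+1), ∑ k ∈ range (α+β+1),
              Complex.I * deriv (b j k) x * h j (k+1) x := by
        rw [Finset.sum_range_succ]
        have hrow : ∑ k ∈ range (α+β+1+1),
            (Complex.I * (if k = 0 then 0 else deriv (b (β+1) (k-1)) x)) * h (β+1) k x = 0 := by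
          refine Finset.sum_eq_zero fun k _ => ?_
          rcases k with _ | k
          · simp
          · have e : b (β+1) k = fun _ => 0 := hbV1 (β+1) k (by omega)
            simp [e]
        rw [hrow, add_zero]
        refine Finset.sum_congr rfl fun j _ => ?_
        rw [Finset.sum_range_succ' (fun k =>
          (Complex.I * (if k = 0 then 0 else deriv (b j (k-1)) x)) * h j k x) (α+β+1)]
        simp
      have hP3 : ∑ j ∈ range (β+1+1), ∑ k ∈ range (α+β+1+1),
            (2 * (j:ℂ) * Complex.I * deriv (b j k) x) * h j k x
          = ∑ j ∈ range (β+1), ∑ k ∈ range (α+β+1),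
              2 * (j:ℂ) * Complex.I * deriv (b j k) x * h j k x := by
        rw [Finset.sum_range_succ]
        have hrow : ∑ k ∈ range (α+β+1+1),
            (2 * ((β+1 : ℕ):ℂ) * Complex.I * deriv (b (β+1) k) x) * h (β+1) k x = 0 := by
          refine Finset.sum_eq_zero fun k _ => ?_
          have e : b (β+1) k = fun _ => 0 := hbV1 (β+1) k (by omega)
          simp [e]
        rw [hrow, add_zero]
        refine Finset.sum_congr rfl fun j _ => ?_
        rw [Finset.sum_range_succ]
        have e : b j (α+β+1) = fun _ => 0 := hbV2 j (α+β+1) (by omega)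
        simp [e]
      have hP4 : ∑ j ∈ range (β+1+1), ∑ k ∈ range (α+β+1+1),
            (-Complex.I * (x:ℂ) * deriv (deriv (b j k)) x) * h j k x
          = ∑ j ∈ range (β+1), ∑ k ∈ range (α+β+1),
              -Complex.I * (x:ℂ) * deriv (deriv (b j k)) x * h j k x := by
        rw [Finset.sum_range_succ]
        have hrow : ∑ k ∈ range (α+β+1+1),
            (-Complex.I * (x:ℂ) * deriv (deriv (b (β+1) k)) x) * h (β+1) k x = 0 := by
          refine Finset.sum_eq_zero fun k _ => ?_
          have e : b (β+1) k = fun _ => 0 := hbV1 (β+1) k (by omega)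
          simp [e]
        rw [hrow, add_zero]
        refine Finset.sum_congr rfl fun j _ => ?_
        rw [Finset.sum_range_succ]
        have e : b j (α+β+1) = fun _ => 0 := hbV2 j (α+β+1) (by omega)
        simp [e]
      show _ = ∑ j ∈ range (β+1+1), ∑ k ∈ range (α+β+1+1),
          ((if j = 0 then 0 else b (j-1) k x)
            + Complex.I * (if k = 0 then 0 else deriv (b j (k-1)) x)
            + 2 * (j:ℂ) * Complex.I * deriv (b j k) x
            + -Complex.I * (x:ℂ) * deriv (deriv (b j k)) x) * h j k x
      simp only [add_mul, Finset.sum_add_distrib]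
      rw [hP1, hP2, hP3, hP4]


section Analysis

lemma calX_const_mul (c : ℂ) (F : ℝ → ℂ) :
    calX (fun ξ => c * F ξ) = fun ξ => c * calX F ξ := by
  funext ξ
  show -2 * (ξ:ℂ) * deriv (fun y => c * F y) ξ = c * (-2 * (ξ:ℂ) * deriv F ξ)
  rw [deriv_const_mul_field]
  ring

lemma calU_const_mul (ν c : ℂ) (F : ℝ → ℂ) :
    calU ν (fun ξ => c * F ξ) = fun ξ => c * calU ν F ξ := by
  funext ξ
  show Complex.I * ((ν^2 - 1) / (4*(ξ:ℂ)) * (c * F ξ)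
      - (ξ:ℂ) * deriv (deriv (fun y => c * F y)) ξ)
    = c * (Complex.I * ((ν^2 - 1) / (4*(ξ:ℂ)) * F ξ - (ξ:ℂ) * deriv (deriv F) ξ))
  rw [deriv_const_mul_field' c, deriv_const_mul_field' c]
  show Complex.I * ((ν^2 - 1) / (4*(ξ:ℂ)) * (c * F ξ)
      - (ξ:ℂ) * (c * deriv (deriv F) ξ)) = _
  ring

lemma iter_const_mul (ν c : ℂ) (α β : ℕ) (F : ℝ → ℂ) :
    (calU ν)^[β] (calX^[α] (fun ξ => c * F ξ))
      = fun ξ => c * (calU ν)^[β] (calX^[α] F) ξ := by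
  induction β with
  | zero =>
    simp only [Function.iterate_zero, id_eq]
    induction α with
    | zero => rfl
    | succ m ih =>
      rw [Function.iterate_succ_apply', ih, calX_const_mul,
        Function.iterate_succ_apply' calX m F]
  | succ m ih =>
    rw [Function.iterate_succ_apply', ih, calU_const_mul,
      Function.iterate_succ_apply' (calU ν) m (calX^[α] F)]

lemma L2w_const_mul (c : ℂ) (F : ℝ → ℂ) (J : Set ℝ) :
    L2w (fun ξ => c * F ξ) J = ENNReal.ofReal ‖c‖ * L2w F J := by
  unfold L2w
  have hpt : ∀ ξ : ℝ, ENNReal.ofReal (‖c * F ξ‖ ^ 2) / ENNReal.ofReal |ξ|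
      = ENNReal.ofReal (‖c‖ ^ 2) * (ENNReal.ofReal (‖F ξ‖ ^ 2) / ENNReal.ofReal |ξ|) := by
    intro ξ
    rw [norm_mul, mul_pow, ENNReal.ofReal_mul (by positivity), mul_div_assoc]
  simp_rw [hpt]
  rw [lintegral_const_mul' _ _ ENNReal.ofReal_ne_top]
  rw [ENNReal.mul_rpow_of_nonneg _ _ (by norm_num : (0:ℝ) ≤ 1/2)]
  congr 1
  rw [ENNReal.ofReal_rpow_of_nonneg (by positivity) (by norm_num : (0:ℝ) ≤ 1/2)]
  congr 1
  rw [← Real.rpow_natCast ‖c‖ 2, ← Real.rpow_mul (norm_nonneg c)]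
  norm_num

lemma rpow_sum_le {ι : Type*} (s : Finset ι) (f : ι → ENNReal) :
    (∑ i ∈ s, f i) ^ (1/2 : ℝ) ≤ ∑ i ∈ s, (f i) ^ (1/2 : ℝ) := by
  induction s using Finset.cons_induction with
  | empty => simp [ENNReal.zero_rpow_of_pos (by norm_num : (0:ℝ) < 1/2)]
  | cons a s ha ih =>
    rw [Finset.sum_cons, Finset.sum_cons]
    exact le_trans (ENNReal.rpow_add_le_add_rpow _ _ (by norm_num) (by norm_num))
      (add_le_add_right ih _)

end Analysis


/-- Estimate away from the singular interval `I = [1/2, 3/2]` for the solution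
`f(ξ) = (i/λ)·g(ξ)/(ξ−1)` of the (rescaled) twisted equation:
`‖𝒰^β 𝒳^α f‖_{𝕃²(ℝ∖I)} ≤ (C/|λ|) Σ_{j+k≤α+β, j≤β} ‖𝒰^j 𝒳^k g‖_{𝕃²(ℝ)}`. -/
theorem twisted_solution_estimate_off_I (α β : ℕ) :
    ∃ C > 0, ∀ (ν : ℂ) (lam : ℝ), lam ≠ 0 →
      ∀ g : ℝ → ℂ, ContDiffOn ℝ (⊤ : ℕ∞) g {(0 : ℝ)}ᶜ →
        L2w ((calU ν)^[β] (calX^[α]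
            (fun ξ : ℝ => Complex.I / (lam : ℂ) * g ξ / ((ξ : ℂ) - 1))))
          (Set.Icc (1 / 2 : ℝ) (3 / 2))ᶜ ≤
        ENNReal.ofReal (C / |lam|) *
          ∑ j ∈ range (β + 1), ∑ k ∈ range (α + β - j + 1),
            L2w ((calU ν)^[j] (calX^[k] g)) Set.univ := by
  obtain ⟨b, hbG, hbV1, hbV2, hrep⟩ := rep α β
  choose Cb hCb0 hCbB using fun j k => (hbG j k).bound
  set C₀ : ℝ := ∑ j ∈ range (β+1), ∑ k ∈ range (α+β+1), Cb j k with hC₀def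
  have hC₀pos : 0 < C₀ :=
    Finset.sum_pos (fun j _ => Finset.sum_pos (fun k _ => hCb0 j k)
      Finset.nonempty_range_add_one) Finset.nonempty_range_add_one
  have hC₀ge : ∀ j ∈ range (β+1), ∀ k ∈ range (α+β+1), Cb j k ≤ C₀ := by
    intro j hj k hk
    calc Cb j k ≤ ∑ k' ∈ range (α+β+1), Cb j k' :=
          Finset.single_le_sum (fun k' _ => (hCb0 j k').le) hk
      _ ≤ C₀ := Finset.single_le_sum
          (f := fun j' => ∑ k' ∈ range (α+β+1), Cb j' k')
          (fun j' _ => Finset.sum_nonneg fun k' _ => (hCb0 j' k').le) hj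
  set D : ℝ := C₀^2 * ((β:ℝ)+1) * ((α:ℝ)+(β:ℝ)+1) with hDdef
  have hDpos : 0 < D := by positivity
  refine ⟨Real.sqrt D, Real.sqrt_pos.2 hDpos, ?_⟩
  intro ν lam hlam g hg
  have hsm : ∀ j k : ℕ, ContDiffOn ℝ (⊤:ℕ∞) ((calU ν)^[j] (calX^[k] g)) {(0:ℝ)}ᶜ :=
    fun j k => smooth_iter isOpen_compl_singleton h0_O0 hg j k
  have hfun : (fun ξ : ℝ => Complex.I / (lam:ℂ) * g ξ / ((ξ:ℂ) - 1))
      = fun ξ => (Complex.I / (lam:ℂ)) * (m0 ξ * g ξ) := by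
    funext ξ
    simp only [m0]
    ring
  rw [hfun, iter_const_mul, L2w_const_mul]
  have hc : ‖Complex.I / (lam:ℂ)‖ = 1 / |lam| := by
    rw [norm_div, Complex.norm_I]
    simp
  rw [hc]
  -- pointwise bound off the interval
  have hpt : ∀ x : ℝ, x ∉ Set.Icc (1/2:ℝ) (3/2) → x ≠ 0 →
      ‖(calU ν)^[β] (calX^[α] (fun ξ => m0 ξ * g ξ)) x‖^2
        ≤ D * ∑ j ∈ range (β+1), ∑ k ∈ range (α+β-j+1),
            ‖(calU ν)^[j] (calX^[k] g) x‖^2 := by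
    intro x hxI hx0
    have hx1 : x ≠ 1 := by
      intro h
      exact hxI (by rw [h]; exact Set.mem_Icc.2 ⟨by norm_num, by norm_num⟩)
    have hres := hrep ν g hg x hx0 hx1
    have hshrink : ∀ j ∈ range (β+1),
        ∑ k ∈ range (α+β+1), b j k x * ((calU ν)^[j] (calX^[k] g)) x
          = ∑ k ∈ range (α+β-j+1), b j k x * ((calU ν)^[j] (calX^[k] g)) x := by
      intro j hj
      refine (Finset.sum_subset (Finset.range_subset_range.2 (by omega)) ?_).symm
      intro k hk hk'
      have hjk : α + β < j + k := by
        simp only [Finset.mem_range] at hj hk hk'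
        omega
      rw [hbV2 j k hjk]
      simp
    rw [Finset.sum_congr rfl hshrink] at hres
    have h1 : ‖(calU ν)^[β] (calX^[α] (fun ξ => m0 ξ * g ξ)) x‖
        ≤ ∑ j ∈ range (β+1), ∑ k ∈ range (α+β-j+1),
            C₀ * ‖(calU ν)^[j] (calX^[k] g) x‖ := by
      rw [hres]
      refine le_trans (norm_sum_le _ _) (Finset.sum_le_sum fun j hj => ?_)
      refine le_trans (norm_sum_le _ _) (Finset.sum_le_sum fun k hk => ?_)
      rw [norm_mul]
      refine mul_le_mul_of_nonneg_right ?_ (norm_nonneg _)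
      refine le_trans (hCbB j k x hxI) (hC₀ge j hj k ?_)
      have := Finset.mem_range.1 hk
      exact Finset.mem_range.2 (by omega)
    have hA : ∀ j ∈ range (β+1),
        (∑ k ∈ range (α+β-j+1), C₀ * ‖(calU ν)^[j] (calX^[k] g) x‖)^2
          ≤ C₀^2 * ((α:ℝ)+(β:ℝ)+1)
              * ∑ k ∈ range (α+β-j+1), ‖(calU ν)^[j] (calX^[k] g) x‖^2 := by
      intro j hj
      rw [← Finset.mul_sum, mul_pow]
      have h2 := sq_sum_le_card_mul_sum_sq (s := range (α+β-j+1))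
        (f := fun k => ‖(calU ν)^[j] (calX^[k] g) x‖)
      have hcard : ((α+β-j+1 : ℕ) : ℝ) ≤ (α:ℝ)+(β:ℝ)+1 := by
        have h3 : (α+β-j+1 : ℕ) ≤ α+β+1 := by omega
        calc ((α+β-j+1 : ℕ) : ℝ) ≤ ((α+β+1 : ℕ) : ℝ) := by exact_mod_cast h3
          _ = (α:ℝ)+(β:ℝ)+1 := by push_cast; ring
      calc C₀^2 * (∑ k ∈ range (α+β-j+1), ‖(calU ν)^[j] (calX^[k] g) x‖)^2
          ≤ C₀^2 * (((α+β-j+1 : ℕ) : ℝ)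
              * ∑ k ∈ range (α+β-j+1), ‖(calU ν)^[j] (calX^[k] g) x‖^2) := by
            refine mul_le_mul_of_nonneg_left ?_ (by positivity)
            simpa using h2
        _ ≤ C₀^2 * (((α:ℝ)+(β:ℝ)+1)
              * ∑ k ∈ range (α+β-j+1), ‖(calU ν)^[j] (calX^[k] g) x‖^2) := by
            refine mul_le_mul_of_nonneg_left ?_ (by positivity)
            exact mul_le_mul_of_nonneg_right hcard
              (Finset.sum_nonneg fun k _ => by positivity)
        _ = C₀^2 * ((α:ℝ)+(β:ℝ)+1)
              * ∑ k ∈ range (α+β-j+1), ‖(calU ν)^[j] (calX^[k] g) x‖^2 := by ring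
    calc ‖(calU ν)^[β] (calX^[α] (fun ξ => m0 ξ * g ξ)) x‖^2
        ≤ (∑ j ∈ range (β+1), ∑ k ∈ range (α+β-j+1),
            C₀ * ‖(calU ν)^[j] (calX^[k] g) x‖)^2 :=
          pow_le_pow_left₀ (norm_nonneg _) h1 2
      _ ≤ ((β+1 : ℕ) : ℝ) * ∑ j ∈ range (β+1),
            (∑ k ∈ range (α+β-j+1), C₀ * ‖(calU ν)^[j] (calX^[k] g) x‖)^2 := by
          have := sq_sum_le_card_mul_sum_sq (s := range (β+1))
            (f := fun j => ∑ k ∈ range (α+β-j+1), C₀ * ‖(calU ν)^[j] (calX^[k] g) x‖)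
          simpa using this
      _ ≤ ((β+1 : ℕ) : ℝ) * ∑ j ∈ range (β+1), (C₀^2 * ((α:ℝ)+(β:ℝ)+1)
            * ∑ k ∈ range (α+β-j+1), ‖(calU ν)^[j] (calX^[k] g) x‖^2) := by
          refine mul_le_mul_of_nonneg_left (Finset.sum_le_sum hA) (by positivity)
      _ = D * ∑ j ∈ range (β+1), ∑ k ∈ range (α+β-j+1),
            ‖(calU ν)^[j] (calX^[k] g) x‖^2 := by
          rw [← Finset.mul_sum, hDdef]
          push_cast
          ring
  -- measurability
  have hGae : ∀ j k : ℕ, AEMeasurable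
      (fun ξ : ℝ => ENNReal.ofReal (‖(calU ν)^[j] (calX^[k] g) ξ‖^2) / ENNReal.ofReal |ξ|)
      (volume.restrict (Set.Icc (1/2:ℝ) (3/2))ᶜ) := by
    intro j k
    have h2 : volume.restrict ({(0:ℝ)}ᶜ) = volume := by
      have : ({(0:ℝ)}ᶜ : Set ℝ) =ᵐ[volume] Set.univ := by
        rw [ae_eq_univ]
        simp
      rw [Measure.restrict_congr_set this, Measure.restrict_univ]
    have hcm : AEMeasurable ((calU ν)^[j] (calX^[k] g)) volume := by
      have h1 : AEMeasurable ((calU ν)^[j] (calX^[k] g)) (volume.restrict ({(0:ℝ)}ᶜ)) :=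
        ((hsm j k).continuousOn).aemeasurable isOpen_compl_singleton.measurableSet
      rwa [h2] at h1
    have hnum : AEMeasurable
        (fun ξ : ℝ => ENNReal.ofReal (‖(calU ν)^[j] (calX^[k] g) ξ‖^2))
        (volume.restrict (Set.Icc (1/2:ℝ) (3/2))ᶜ) :=
      (((hcm.norm).pow_const 2).ennreal_ofReal).restrict
    have hden : Measurable (fun ξ : ℝ => (ENNReal.ofReal |ξ|)⁻¹) :=
      (ENNReal.measurable_ofReal.comp _root_.continuous_abs.measurable).inv
    simpa [div_eq_mul_inv] using hnum.fun_mul hden.aemeasurable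
  -- the key integral estimate
  have hkey : L2w ((calU ν)^[β] (calX^[α] (fun ξ => m0 ξ * g ξ)))
        (Set.Icc (1/2:ℝ) (3/2))ᶜ
      ≤ ENNReal.ofReal (Real.sqrt D) * ∑ j ∈ range (β+1), ∑ k ∈ range (α+β-j+1),
          L2w ((calU ν)^[j] (calX^[k] g)) Set.univ := by
    unfold L2w
    have hmIc : MeasurableSet (Set.Icc (1/2:ℝ) (3/2))ᶜ := measurableSet_Icc.compl
    have hae : ∀ᵐ ξ ∂(volume.restrict (Set.Icc (1/2:ℝ) (3/2))ᶜ),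
        ENNReal.ofReal (‖(calU ν)^[β] (calX^[α] (fun ξ' => m0 ξ' * g ξ')) ξ‖^2)
            / ENNReal.ofReal |ξ|
          ≤ ENNReal.ofReal D * ∑ j ∈ range (β+1), ∑ k ∈ range (α+β-j+1),
              (ENNReal.ofReal (‖(calU ν)^[j] (calX^[k] g) ξ‖^2) / ENNReal.ofReal |ξ|) := by
      have hz : ∀ᵐ ξ ∂(volume.restrict (Set.Icc (1/2:ℝ) (3/2))ᶜ), ξ ≠ (0:ℝ) := by
        refine (ae_iff).2 (measure_mono_null (t := {(0:ℝ)})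
          (fun y hy => by simpa using hy) ?_)
        refine le_antisymm (le_trans (Measure.le_iff'.1 Measure.restrict_le_self _) ?_)
          (zero_le)
        simp
      filter_upwards [hz, ae_restrict_mem hmIc] with ξ hξ0 hξI
      have hb2 := hpt ξ hξI hξ0
      have step1 : ENNReal.ofReal (‖(calU ν)^[β] (calX^[α] (fun ξ' => m0 ξ' * g ξ')) ξ‖^2)
            / ENNReal.ofReal |ξ|
          ≤ ENNReal.ofReal (D * ∑ j ∈ range (β+1), ∑ k ∈ range (α+β-j+1),
              ‖(calU ν)^[j] (calX^[k] g) ξ‖^2) / ENNReal.ofReal |ξ| :=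
        ENNReal.div_le_div_right (ENNReal.ofReal_le_ofReal hb2) _
      refine le_trans step1 (le_of_eq ?_)
      rw [ENNReal.ofReal_mul hDpos.le, mul_div_assoc]
      congr 1
      have hsum : ENNReal.ofReal (∑ j ∈ range (β+1), ∑ k ∈ range (α+β-j+1),
            ‖(calU ν)^[j] (calX^[k] g) ξ‖^2)
          = ∑ j ∈ range (β+1), ∑ k ∈ range (α+β-j+1),
              ENNReal.ofReal (‖(calU ν)^[j] (calX^[k] g) ξ‖^2) := by
        rw [ENNReal.ofReal_sum_of_nonneg
          (fun j _ => Finset.sum_nonneg fun k _ => by positivity)]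
        exact Finset.sum_congr rfl fun j _ =>
          ENNReal.ofReal_sum_of_nonneg (fun k _ => by positivity)
      rw [hsum]
      simp only [div_eq_mul_inv, Finset.sum_mul]
    calc (∫⁻ ξ in (Set.Icc (1/2:ℝ) (3/2))ᶜ,
          ENNReal.ofReal (‖(calU ν)^[β] (calX^[α] (fun ξ' => m0 ξ' * g ξ')) ξ‖^2)
            / ENNReal.ofReal |ξ|) ^ (1/2 : ℝ)
        ≤ (∫⁻ ξ in (Set.Icc (1/2:ℝ) (3/2))ᶜ,
            ENNReal.ofReal D * ∑ j ∈ range (β+1), ∑ k ∈ range (α+β-j+1),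
              (ENNReal.ofReal (‖(calU ν)^[j] (calX^[k] g) ξ‖^2)
                / ENNReal.ofReal |ξ|)) ^ (1/2 : ℝ) :=
          ENNReal.rpow_le_rpow (lintegral_mono_ae hae) (by norm_num)
      _ = (ENNReal.ofReal D * ∑ j ∈ range (β+1), ∑ k ∈ range (α+β-j+1),
            ∫⁻ ξ in (Set.Icc (1/2:ℝ) (3/2))ᶜ,
              ENNReal.ofReal (‖(calU ν)^[j] (calX^[k] g) ξ‖^2)
                / ENNReal.ofReal |ξ|) ^ (1/2 : ℝ) := by
          rw [lintegral_const_mul' _ _ ENNReal.ofReal_ne_top]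
          congr 2
          rw [lintegral_finset_sum' _ (fun j _ => Finset.aemeasurable_fun_sum _
            (fun k _ => hGae j k))]
          exact Finset.sum_congr rfl fun j _ =>
            lintegral_finset_sum' _ (fun k _ => hGae j k)
      _ ≤ (ENNReal.ofReal D * ∑ j ∈ range (β+1), ∑ k ∈ range (α+β-j+1),
            ∫⁻ ξ in (Set.univ : Set ℝ),
              ENNReal.ofReal (‖(calU ν)^[j] (calX^[k] g) ξ‖^2)
                / ENNReal.ofReal |ξ|) ^ (1/2 : ℝ) := by
          refine ENNReal.rpow_le_rpow (mul_le_mul_right ?_ _) (by norm_num)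
          exact Finset.sum_le_sum fun j _ => Finset.sum_le_sum fun k _ =>
            lintegral_mono_set (Set.subset_univ _)
      _ ≤ ENNReal.ofReal (Real.sqrt D) * ∑ j ∈ range (β+1), ∑ k ∈ range (α+β-j+1),
            (∫⁻ ξ in (Set.univ : Set ℝ),
              ENNReal.ofReal (‖(calU ν)^[j] (calX^[k] g) ξ‖^2)
                / ENNReal.ofReal |ξ|) ^ (1/2 : ℝ) := by
          rw [ENNReal.mul_rpow_of_nonneg _ _ (by norm_num : (0:ℝ) ≤ 1/2)]
          rw [ENNReal.ofReal_rpow_of_nonneg hDpos.le (by norm_num : (0:ℝ) ≤ 1/2)]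
          rw [← Real.sqrt_eq_rpow]
          refine mul_le_mul_right ?_ _
          refine le_trans (rpow_sum_le _ _) (Finset.sum_le_sum fun j _ => ?_)
          exact rpow_sum_le _ _
  calc ENNReal.ofReal (1/|lam|) * L2w ((calU ν)^[β] (calX^[α] (fun ξ => m0 ξ * g ξ)))
        (Set.Icc (1/2:ℝ) (3/2))ᶜ
      ≤ ENNReal.ofReal (1/|lam|) * (ENNReal.ofReal (Real.sqrt D)
          * ∑ j ∈ range (β+1), ∑ k ∈ range (α+β-j+1),
            L2w ((calU ν)^[j] (calX^[k] g)) Set.univ) := mul_le_mul_right hkey _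
    _ = ENNReal.ofReal (Real.sqrt D / |lam|)
          * ∑ j ∈ range (β+1), ∑ k ∈ range (α+β-j+1),
            L2w ((calU ν)^[j] (calX^[k] g)) Set.univ := by
        rw [← mul_assoc, ← ENNReal.ofReal_mul (by positivity)]
        congr 2
        rw [one_div, inv_mul_eq_div]
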